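/- Let D ⊂ ℝ^n be a box (product of intervals) with side lengths ρ_1,...,ρ_n satisfying ρ_1·...·ρ_n < 1/(n!·(k+1)^{n+1}), and let R_k = {p/q : p ∈ ℤ^n, 1 ≤ q ≤ k}. Then there exists an affine hyperplane L ⊆ ℝ^n such that R_k ∩ D ⊆ L. -/

import Mathlib

open Set Finset

private lemma simplex_aux (n k : ℕ) (hn : 0 < n) (hk : 0 < k) (a b : Fin n → ℝ)
    (hab : ∀ i, a i ≤ b i)
    (hvol : ∏ i, (b i - a i) < 1 / ((n.factorial : ℝ) * ((k : ℝ) + 1) ^ (n + 1)))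
    (S : Set (Fin n → ℝ))
    (hS : ∀ x ∈ S, (∃ (p : Fin n → ℤ) (q : ℕ), 1 ≤ q ∧ q ≤ k ∧ ∀ i, x i = (p i : ℝ) / (q : ℝ))
          ∧ ∀ i, x i ∈ Icc (a i) (b i)) :
    ∃ (u : Fin n → ℝ) (c : ℝ), u ≠ 0 ∧ ∀ x ∈ S, ∑ i, u i * x i = c := by
  classical
  -- Degenerate case: some side has zero length
  by_cases hdeg : ∃ i, b i = a i
  · obtain ⟨i, hi⟩ := hdeg
    refine ⟨Pi.single i 1, a i, ?_, ?_⟩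
    · intro h
      simpa using congrFun h i
    · intro x hx
      have hxi := (hS x hx).2 i
      have hxa : x i = a i := le_antisymm (hi ▸ hxi.2) hxi.1
      have hsum : ∑ j, (Pi.single i (1:ℝ) : Fin n → ℝ) j * x j = x i := by
        simp [Pi.single_apply, ite_mul]
      rw [hsum, hxa]
  push_neg at hdeg
  have hρpos : ∀ i, 0 < b i - a i := fun i => sub_pos.mpr ((hab i).lt_of_ne (Ne.symm (hdeg i)))
  -- Empty case
  rcases Set.eq_empty_or_nonempty S with hS0 | ⟨x₀, hx₀⟩
  · exact ⟨fun _ => 1, 0, fun h => by simpa using congrFun h ⟨0, hn⟩, by simp [hS0]⟩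
  -- Lift points to ℝ^{1+n}
  set e : (Fin n → ℝ) → (Fin 1 ⊕ Fin n → ℝ) := fun x => Sum.elim (fun _ => 1) x with he
  set T : Set (Fin 1 ⊕ Fin n → ℝ) := e '' S with hT
  by_cases hspan : Submodule.span ℝ T = ⊤
  · -- Contradiction case : there are 1+n affinely independent points
    exfalso
    obtain ⟨bs, hbsT, hbsspan, hbsli⟩ := exists_linearIndependent ℝ T
    rw [hspan] at hbsspan
    have hfin : bs.Finite := hbsli.setFinite
    haveI := hfin.fintype
    have hcard : Fintype.card bs = 1 + n := by
      have h1 := finrank_span_set_eq_card hbsli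
      rw [hbsspan, finrank_top] at h1
      rw [Module.finrank_fintype_fun_eq_card] at h1
      simpa [Set.toFinset_card] using h1.symm
    have g : (Fin 1 ⊕ Fin n) ≃ bs := Fintype.equivOfCardEq (by simp [hcard])
    set v : (Fin 1 ⊕ Fin n) → (Fin 1 ⊕ Fin n → ℝ) := fun j => (g j : Fin 1 ⊕ Fin n → ℝ) with hv
    have hvli : LinearIndependent ℝ v := hbsli.comp g g.injective
    have hvT : ∀ j, v j ∈ T := fun j => hbsT (g j).2
    have hex : ∀ j, ∃ y ∈ S, e y = v j := fun j => (Set.mem_image _ _ _).mp (hvT j)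
    choose x hxS hxe using hex
    choose p q hq1 hqk hxq using fun j => (hS (x j) (hxS j)).1
    have hbox : ∀ j i, x j i ∈ Icc (a i) (b i) := fun j => (hS (x j) (hxS j)).2
    set M : Matrix (Fin 1 ⊕ Fin n) (Fin 1 ⊕ Fin n) ℝ := Matrix.of v with hM
    have hM1 : ∀ j c, M j (Sum.inl c) = 1 := by
      intro j c
      have := congrFun (hxe j) (Sum.inl c)
      simpa [he, hM] using this.symm
    have hMx : ∀ j i, M j (Sum.inr i) = x j i := by
      intro j i
      have := congrFun (hxe j) (Sum.inr i)
      simpa [he, hM] using this.symm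
    have hMli : LinearIndependent ℝ (fun j => M j) := hvli
    have hdet0 : M.det ≠ 0 :=
      ((Matrix.isUnit_iff_isUnit_det M).mp
        (Matrix.linearIndependent_rows_iff_isUnit.mp hMli)).ne_zero
    -- Upper bound for |det M|
    set E : Matrix (Fin n) (Fin n) ℝ :=
      Matrix.of fun j i => (x (Sum.inr j) i - x (Sum.inl 0) i) / (b i - a i) with hE
    have hdetM_eq : M.det = E.det * ∏ i, (b i - a i) := by
      have hblock : M = Matrix.fromBlocks 1
          (Matrix.of fun (_ : Fin 1) i => x (Sum.inl 0) i)
          (Matrix.of fun (_ : Fin n) (_ : Fin 1) => (1:ℝ))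
          (Matrix.of fun j i => x (Sum.inr j) i) := by
        ext j i
        rcases j with c | j <;> rcases i with c' | i
        · rw [Subsingleton.elim c c']
          simp [hM1, Matrix.one_apply]
        · rw [Subsingleton.elim c 0]
          simp [hMx]
        · simp [hM1]
        · simp [hMx]
      rw [hblock, Matrix.det_fromBlocks_one₁₁]
      have hsub : (Matrix.of fun j i => x (Sum.inr j) i) -
          (Matrix.of fun (_ : Fin n) (_ : Fin 1) => (1:ℝ)) *
            (Matrix.of fun (_ : Fin 1) i => x (Sum.inl 0) i)
          = E * Matrix.diagonal (fun i => b i - a i) := by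
        ext j i
        rw [Matrix.mul_diagonal]
        simp only [Matrix.sub_apply, Matrix.mul_apply, Fin.sum_univ_one, Matrix.of_apply, hE]
        rw [div_mul_cancel₀ _ (hρpos i).ne']
        ring
      rw [hsub, Matrix.det_mul, Matrix.det_diagonal]
    have hE1 : ∀ j i, |E j i| ≤ 1 := by
      intro j i
      have h1 := hbox (Sum.inr j) i
      have h2 := hbox (Sum.inl 0) i
      rw [hE]
      simp only [Matrix.of_apply]
      rw [abs_div, abs_of_pos (hρpos i), div_le_one (hρpos i), abs_sub_le_iff]
      constructor <;> [linarith [h1.2, h2.1]; linarith [h1.1, h2.2]]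
    have hdetE : |E.det| ≤ (n.factorial : ℝ) := by
      have := Matrix.det_le (A := E) (abv := AbsoluteValue.abs) (x := 1) (fun i j => hE1 i j)
      simpa [Fintype.card_fin, nsmul_eq_mul] using this
    have hρprodpos : 0 < ∏ i, (b i - a i) := Finset.prod_pos fun i _ => hρpos i
    have hMupper : |M.det| ≤ (n.factorial : ℝ) * ∏ i, (b i - a i) := by
      rw [hdetM_eq, abs_mul, abs_of_pos hρprodpos]
      exact mul_le_mul_of_nonneg_right hdetE hρprodpos.le
    -- Lower bound for |det M|
    have hqpos : ∀ j, (0:ℝ) < (q j : ℝ) := fun j => by exact_mod_cast hq1 j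
    have hq0 : ∀ j, (q j : ℝ) ≠ 0 := fun j => (hqpos j).ne'
    set Z : Matrix (Fin 1 ⊕ Fin n) (Fin 1 ⊕ Fin n) ℤ :=
      Matrix.of fun j => Sum.elim (fun _ => (q j : ℤ)) (p j) with hZ
    have hMZ : M = Matrix.diagonal (fun j => ((q j : ℝ))⁻¹) *
        Z.map (Int.castRingHom ℝ) := by
      ext j i
      rw [Matrix.diagonal_mul]
      rcases i with c | i
      · rw [hM1]
        simp only [Matrix.map_apply, hZ, Matrix.of_apply, Sum.elim_inl, map_natCast]
        exact (inv_mul_cancel₀ (hq0 j)).symm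
      · rw [hMx, hxq j i]
        simp only [Matrix.map_apply, hZ, Matrix.of_apply, Sum.elim_inr,
          Int.coe_castRingHom]
        rw [div_eq_inv_mul]
    have hdm : (Z.map ⇑(Int.castRingHom ℝ)).det = ((Z.det : ℤ) : ℝ) := by
      rw [← RingHom.mapMatrix_apply, ← RingHom.map_det]
      simp
    have hdetZ : M.det = (∏ j, ((q j : ℝ))⁻¹) * ((Z.det : ℤ) : ℝ) := by
      rw [hMZ, Matrix.det_mul, Matrix.det_diagonal, hdm]
    have hZ0 : Z.det ≠ 0 := by
      intro h
      apply hdet0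
      rw [hdetZ, h]
      simp
    have hZ1 : (1:ℝ) ≤ |((Z.det : ℤ) : ℝ)| := by
      rw [← Int.cast_abs]
      exact_mod_cast Int.one_le_abs hZ0
    set Q : ℝ := ∏ j, (q j : ℝ) with hQ
    have hQpos : 0 < Q := Finset.prod_pos fun j _ => hqpos j
    have hQle : Q ≤ ((k : ℝ) + 1) ^ (n + 1) := by
      have h1 : Q ≤ ∏ _j : Fin 1 ⊕ Fin n, ((k : ℝ) + 1) := by
        refine Finset.prod_le_prod (fun j _ => (hqpos j).le) (fun j _ => ?_)
        have : (q j : ℝ) ≤ (k : ℝ) := by exact_mod_cast hqk j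
        linarith
      rw [Finset.prod_const] at h1
      simpa [Fintype.card_sum, Nat.add_comm] using h1
    have habs : |M.det| * Q = |((Z.det : ℤ) : ℝ)| := by
      rw [hdetZ, abs_mul]
      have h1 : |∏ j, ((q j : ℝ))⁻¹| = Q⁻¹ := by
        rw [← Finset.prod_inv_distrib, abs_of_pos]
        exact Finset.prod_pos fun j _ => inv_pos.mpr (hqpos j)
      rw [h1, mul_right_comm, inv_mul_cancel₀ hQpos.ne', one_mul]
    -- Combine
    have hfacpos : (0:ℝ) < (n.factorial : ℝ) := by positivity
    have hkpow : (0:ℝ) < ((k : ℝ) + 1) ^ (n + 1) := by positivity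
    rw [lt_div_iff₀ (by positivity)] at hvol
    have hchain : (1:ℝ) < 1 := by
      calc (1:ℝ) ≤ |((Z.det : ℤ) : ℝ)| := hZ1
        _ = |M.det| * Q := habs.symm
        _ ≤ ((n.factorial : ℝ) * ∏ i, (b i - a i)) * (((k : ℝ) + 1) ^ (n + 1)) :=
            mul_le_mul hMupper hQle hQpos.le
              (mul_nonneg (Nat.cast_nonneg _) hρprodpos.le)
        _ < 1 := by
            have heq : (n.factorial : ℝ) * (∏ i, (b i - a i)) * (((k : ℝ) + 1) ^ (n + 1))
                = (∏ i, (b i - a i)) * ((n.factorial : ℝ) * ((k : ℝ) + 1) ^ (n + 1)) := by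
              ring
            rw [heq]
            exact hvol
    exact absurd hchain (lt_irrefl 1)
  · -- Hyperplane case
    have hann : (Submodule.span ℝ T).dualAnnihilator ≠ ⊥ := by
      intro h
      apply hspan
      apply Subspace.dualAnnihilator_inj.mp
      rw [h, Submodule.dualAnnihilator_top]
    obtain ⟨φ, hφmem, hφ0⟩ := Submodule.exists_mem_ne_zero_of_ne_bot hann
    have hφT : ∀ w ∈ T, φ w = 0 := fun w hw =>
      (Submodule.mem_dualAnnihilator φ).mp hφmem w (Submodule.subset_span hw)
    have hexp : ∀ w : Fin 1 ⊕ Fin n → ℝ,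
        φ w = ∑ j, w j * φ (Pi.single j (1:ℝ) : Fin 1 ⊕ Fin n → ℝ) := by
      intro w
      have hw : w = ∑ j, w j • (Pi.single j (1:ℝ) : Fin 1 ⊕ Fin n → ℝ) := by
        funext i
        simp [Finset.sum_apply, Pi.single_apply]
      conv_lhs => rw [hw]
      rw [map_sum]
      simp [smul_eq_mul]
    have hkey : ∀ x ∈ S,
        φ (Pi.single (Sum.inl 0) (1:ℝ)) + ∑ i, x i * φ (Pi.single (Sum.inr i) 1) = 0 := by
      intro x hx
      have h0 : φ (e x) = 0 := hφT _ ⟨x, hx, rfl⟩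
      rw [hexp] at h0
      rw [Fintype.sum_sum_type] at h0
      simpa [he, Fin.sum_univ_one] using h0
    refine ⟨fun i => φ (Pi.single (Sum.inr i) 1), -φ (Pi.single (Sum.inl 0) 1), ?_, ?_⟩
    · intro hu0
      apply hφ0
      have hui : ∀ i, φ (Pi.single (Sum.inr i) (1:ℝ)) = 0 := fun i => by
        simpa using congrFun hu0 i
      have hl : φ (Pi.single (Sum.inl 0) (1:ℝ)) = 0 := by
        have hk0 := hkey x₀ hx₀
        have hsum : ∑ i, x₀ i * φ (Pi.single (Sum.inr i) (1:ℝ)) = 0 :=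
          Finset.sum_eq_zero fun i _ => by rw [hui i, mul_zero]
        rw [hsum] at hk0
        linarith
      refine LinearMap.ext fun w => ?_
      rw [hexp, LinearMap.zero_apply]
      refine Finset.sum_eq_zero fun j _ => ?_
      rcases j with cc | i
      · rw [Subsingleton.elim cc 0, hl, mul_zero]
      · rw [hui i, mul_zero]
    · intro x hx
      have hk0 := hkey x hx
      have hsum : ∑ i, x i * φ (Pi.single (Sum.inr i) (1:ℝ))
          = ∑ i, (fun i => φ (Pi.single (Sum.inr i) (1:ℝ))) i * x i :=
        Finset.sum_congr rfl fun i _ => mul_comm _ _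
      rw [hsum] at hk0
      linarith

/-- Simplex Lemma (Davenport–Schmidt): if `D ⊂ ℝⁿ` is a box with side lengths
`ρ₁,…,ρₙ` satisfying `ρ₁⋯ρₙ < 1/(n!·(k+1)^{n+1})`, then the rational points with
denominator at most `k` lying in `D` are contained in an affine hyperplane. -/
theorem simplex_lemma (n k : ℕ) (hn : 0 < n) (hk : 0 < k) (a b : Fin n → ℝ)
    (hab : ∀ i, a i ≤ b i)
    (hvol : ∏ i, (b i - a i) < 1 / ((n.factorial : ℝ) * ((k : ℝ) + 1) ^ (n + 1))) :
    ∃ (u : Fin n → ℝ) (c : ℝ), u ≠ 0 ∧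
      ∀ x ∈ {x : Fin n → ℝ | ∃ (p : Fin n → ℤ) (q : ℕ),
              1 ≤ q ∧ q ≤ k ∧ ∀ i, x i = (p i : ℝ) / (q : ℝ)} ∩
            univ.pi fun i => Icc (a i) (b i),
        ∑ i, u i * x i = c := by
  refine simplex_aux n k hn hk a b hab hvol _ ?_
  rintro x ⟨⟨p, q, h1, h2, h3⟩, hbox⟩
  exact ⟨⟨p, q, h1, h2, h3⟩, fun i => hbox i (Set.mem_univ i)⟩
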